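/- Let Â be a closed operator on L_α with domain D(Â) = {G ∈ L_α : M·G ∈ L_α}, where M ≥ 0, and suppose |ÂG| ≤ C(M+1)|G| pointwise controls hold so that dominated convergence applies. Then the set B_bs(Γ₀²) of bounded functions with bounded support is a core for Â: for every G ∈ D(Â), the truncations G_n(η) = G(η)·1{|η| ≤ n, η ⊆ Λ_n} satisfy G_n → G and ÂG_n → ÂG in L_α, where (Λ_n) is an increasing exhausting sequence of compacts. -/
import Mathlib


open MeasureTheory Filter

/-- Truncation of a function on two-component finite configurations to configurations
with at most `n` points, all lying in `Λ`. -/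
noncomputable def truncate {d : ℕ}
    (G : Finset (Fin d → ℝ) × Finset (Fin d → ℝ) → ℝ) (n : ℕ) (Λ : Set (Fin d → ℝ)) :
    Finset (Fin d → ℝ) × Finset (Fin d → ℝ) → ℝ :=
  Set.indicator {η | η.1.card + η.2.card ≤ n ∧ ↑η.1 ⊆ Λ ∧ ↑η.2 ⊆ Λ} G


/-- Dominated-convergence-to-zero lemma that does not require measurability of the
sequence: if the integral is frequently large, those terms must be integrable,
hence a.e. strongly measurable, and ordinary dominated convergence applies. -/
lemma tendsto_integral_zero_of_dominated {α : Type*} [MeasurableSpace α]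
    (μ : Measure α) (f : ℕ → α → ℝ) (h : α → ℝ) (hh : Integrable h μ)
    (h0 : ∀ n x, 0 ≤ f n x) (hle : ∀ n x, f n x ≤ h x)
    (hlim : ∀ x, Tendsto (fun n => f n x) atTop (nhds 0)) :
    Tendsto (fun n => ∫ x, f n x ∂μ) atTop (nhds 0) := by
  by_contra hcon
  rw [Metric.tendsto_atTop] at hcon
  push_neg at hcon
  obtain ⟨ε, hε, hfreq⟩ := hcon
  have hfr : ∃ᶠ n in atTop, ε ≤ ∫ x, f n x ∂μ := by
    rw [frequently_atTop]
    intro N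
    obtain ⟨n, hn, hdist⟩ := hfreq N
    refine ⟨n, hn, ?_⟩
    have hnn : 0 ≤ ∫ x, f n x ∂μ := integral_nonneg (h0 n)
    rw [Real.dist_eq, sub_zero, abs_of_nonneg hnn] at hdist
    exact hdist
  obtain ⟨φ, hφmono, hφ⟩ := Filter.extraction_of_frequently_atTop hfr
  have hint : ∀ k, Integrable (f (φ k)) μ := by
    intro k
    by_contra hni
    have := hφ k
    rw [integral_undef hni] at this
    linarith
  have hDC := tendsto_integral_of_dominated_convergence (μ := μ)
    (F := fun k => f (φ k)) (f := fun _ => (0 : ℝ)) h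
    (fun k => (hint k).aestronglyMeasurable) hh
    (fun k => Filter.Eventually.of_forall (fun x => by
      rw [Real.norm_eq_abs, abs_of_nonneg (h0 (φ k) x)]; exact hle (φ k) x))
    (Filter.Eventually.of_forall (fun x =>
      (hlim x).comp hφmono.tendsto_atTop))
  rw [integral_zero] at hDC
  have := (hDC.eventually (gt_mem_nhds hε)).exists
  obtain ⟨k, hk⟩ := this
  linarith [hφ k]

theorem truncations_form_core {d : ℕ}
    [MeasurableSpace (Finset (Fin d → ℝ) × Finset (Fin d → ℝ))]
    (μ : Measure (Finset (Fin d → ℝ) × Finset (Fin d → ℝ)))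
    (M : Finset (Fin d → ℝ) × Finset (Fin d → ℝ) → ℝ) (hM0 : ∀ η, 0 ≤ M η)
    (LHat : (Finset (Fin d → ℝ) × Finset (Fin d → ℝ) → ℝ) →ₗ[ℝ]
      (Finset (Fin d → ℝ) × Finset (Fin d → ℝ) → ℝ))
    (C : ℝ) (hC : 0 ≤ C)
    (hdom : ∀ G η, |LHat G η| ≤ C * (M η + 1) * |G η|)
    (Λ : ℕ → Set (Fin d → ℝ)) (hΛmono : Monotone Λ)
    (hΛcompact : ∀ n, IsCompact (Λ n)) (hΛunion : (⋃ n, Λ n) = Set.univ)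
    (G : Finset (Fin d → ℝ) × Finset (Fin d → ℝ) → ℝ)
    (hG : Integrable G μ) (hMG : Integrable (fun η => M η * G η) μ) :
    Tendsto (fun n => ∫ η, |truncate G n (Λ n) η - G η| ∂μ) atTop (nhds 0) ∧
    Tendsto (fun n => ∫ η, |LHat (truncate G n (Λ n)) η - LHat G η| ∂μ) atTop (nhds 0) := by
  -- the truncation eventually agrees with G at every point
  have hmem : ∀ η : Finset (Fin d → ℝ) × Finset (Fin d → ℝ),
      ∀ᶠ n in atTop, truncate G n (Λ n) η = G η := by
    intro η
    have hx : ∀ x : Fin d → ℝ, ∃ n, x ∈ Λ n := by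
      intro x
      have : x ∈ ⋃ n, Λ n := by rw [hΛunion]; trivial
      exact Set.mem_iUnion.mp this
    classical
    set f : (Fin d → ℝ) → ℕ := fun x => (hx x).choose with hf
    have hfx : ∀ x, x ∈ Λ (f x) := fun x => (hx x).choose_spec
    set N : ℕ := max ((η.1 ∪ η.2).sup f) (η.1.card + η.2.card) with hN
    rw [eventually_atTop]
    refine ⟨N, fun n hn => ?_⟩
    have hηmem : η ∈ {η : Finset (Fin d → ℝ) × Finset (Fin d → ℝ) |
        η.1.card + η.2.card ≤ n ∧ ↑η.1 ⊆ Λ n ∧ ↑η.2 ⊆ Λ n} := by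
      refine ⟨le_trans (le_max_right _ _) hn, ?_, ?_⟩
      · intro x hxm
        have hx1 : x ∈ η.1 := hxm
        have : f x ≤ n :=
          le_trans (le_trans (Finset.le_sup (Finset.mem_union_left _ hx1))
            (le_max_left _ _)) hn
        exact hΛmono this (hfx x)
      · intro x hxm
        have hx2 : x ∈ η.2 := hxm
        have : f x ≤ n :=
          le_trans (le_trans (Finset.le_sup (Finset.mem_union_right _ hx2))
            (le_max_left _ _)) hn
        exact hΛmono this (hfx x)
    exact Set.indicator_of_mem hηmem G
  have hlim : ∀ η, Tendsto (fun n => |truncate G n (Λ n) η - G η|) atTop (nhds 0) := by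
    intro η
    have : ∀ᶠ n in atTop, |truncate G n (Λ n) η - G η| = 0 := by
      filter_upwards [hmem η] with n hn
      rw [hn, sub_self, abs_zero]
    exact Tendsto.congr' (this.mono fun n hn => hn.symm) tendsto_const_nhds
  have hbnd : ∀ n η, |truncate G n (Λ n) η - G η| ≤ |G η| := by
    intro n η
    unfold truncate
    by_cases h : η ∈ {η : Finset (Fin d → ℝ) × Finset (Fin d → ℝ) |
        η.1.card + η.2.card ≤ n ∧ ↑η.1 ⊆ Λ n ∧ ↑η.2 ⊆ Λ n}
    · rw [Set.indicator_of_mem h, sub_self, abs_zero]; exact abs_nonneg _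
    · rw [Set.indicator_of_notMem h, zero_sub, abs_neg]
  constructor
  · exact tendsto_integral_zero_of_dominated μ _ (fun η => |G η|) hG.abs
      (fun n η => abs_nonneg _) hbnd hlim
  · -- dominating function
    have hdomInt : Integrable (fun η => C * (M η + 1) * |G η|) μ := by
      have : (fun η => C * (M η + 1) * |G η|)
          = fun η => C * |M η * G η| + C * |G η| := by
        funext η
        rw [abs_mul, abs_of_nonneg (hM0 η)]
        ring
      rw [this]
      exact ((hMG.abs.const_mul C).add (hG.abs.const_mul C))
    have key : ∀ n η, |LHat (truncate G n (Λ n)) η - LHat G η|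
        ≤ C * (M η + 1) * |truncate G n (Λ n) η - G η| := by
      intro n η
      have : LHat (truncate G n (Λ n)) η - LHat G η
          = LHat (truncate G n (Λ n) - G) η := by
        rw [map_sub]; rfl
      rw [this]
      have := hdom (truncate G n (Λ n) - G) η
      simpa using this
    refine tendsto_integral_zero_of_dominated μ _ (fun η => C * (M η + 1) * |G η|)
      hdomInt (fun n η => abs_nonneg _) ?_ ?_
    · intro n η
      calc |LHat (truncate G n (Λ n)) η - LHat G η|
          ≤ C * (M η + 1) * |truncate G n (Λ n) η - G η| := key n η
        _ ≤ C * (M η + 1) * |G η| := by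
            apply mul_le_mul_of_nonneg_left (hbnd n η)
            have := hM0 η
            positivity
    · intro η
      have hsq : Tendsto (fun n => C * (M η + 1) * |truncate G n (Λ n) η - G η|)
          atTop (nhds 0) := by
        have := (hlim η).const_mul (C * (M η + 1))
        simpa [mul_assoc] using this
      refine squeeze_zero (fun n => abs_nonneg _) (fun n => key n η) hsq
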